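/- Let R ≠ 0 and c₁ > 0, c₂ ∈ ℝ be such that c₁(tanh²(½√c₁·(t+c₂)) - 1)/(2R) > 0 for t in an open interval I. Then ω(t) = log(c₁(tanh²(½√c₁·(t+c₂)) - 1)/(2R)) satisfies ω''(t) = R·e^{ω(t)} on I. -/

import Mathlib

open Real

theorem stmt_2 (R c₁ c₂ : ℝ) (hR : R ≠ 0) (hc₁ : 0 < c₁) (a b : ℝ)
    (hpos : ∀ t ∈ Set.Ioo a b,
      0 < c₁ * ((Real.tanh ((1 / 2) * Real.sqrt c₁ * (t + c₂))) ^ 2 - 1) / (2 * R))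
    (ω : ℝ → ℝ)
    (hω : ∀ t, ω t =
      Real.log (c₁ * ((Real.tanh ((1 / 2) * Real.sqrt c₁ * (t + c₂))) ^ 2 - 1) / (2 * R))) :
    ∀ t ∈ Set.Ioo a b, iteratedDeriv 2 ω t = R * Real.exp (ω t) := by
  intro t ht
  set u : ℝ → ℝ := fun s => (1 / 2) * Real.sqrt c₁ * (s + c₂) with hu_def
  have hcoshpos : ∀ s, 0 < Real.cosh (u s) := fun s => Real.cosh_pos (u s)
  have hcoshne : ∀ s, Real.cosh (u s) ≠ 0 := fun s => (hcoshpos s).ne'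
  have hsq : ∀ s, Real.cosh (u s) ^ 2 - Real.sinh (u s) ^ 2 = 1 :=
    fun s => Real.cosh_sq_sub_sinh_sq (u s)
  -- tanh² - 1 = -1/cosh²
  have harg : ∀ s, c₁ * ((Real.tanh (u s)) ^ 2 - 1) / (2 * R)
      = (-c₁ / (2 * R)) / (Real.cosh (u s)) ^ 2 := by
    intro s
    rw [Real.tanh_eq_sinh_div_cosh]
    have h1 := hsq s
    field_simp
    linear_combination (-1) * hsq s
  -- R < 0
  have hA : 0 < -c₁ / (2 * R) := by
    have h := hpos t ht
    rw [harg t] at h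
    have hc2 : 0 < (Real.cosh (u t)) ^ 2 := pow_pos (hcoshpos t) 2
    have := mul_pos h hc2
    rwa [div_mul_cancel₀ _ hc2.ne'] at this
  have hRneg : R < 0 := by
    rcases lt_or_gt_of_ne hR with h' | h'
    · exact h'
    · exfalso
      have : -c₁ / (2 * R) < 0 := div_neg_of_neg_of_pos (by linarith) (by linarith)
      linarith
  -- rewrite ω
  have hωe : ω = fun s => Real.log (-c₁ / (2 * R)) - 2 * Real.log (Real.cosh (u s)) := by
    funext s
    rw [hω s, harg s, Real.log_div hA.ne' (pow_ne_zero 2 (hcoshne s)), Real.log_pow]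
    push_cast
    ring
  -- first derivative
  have hu' : ∀ s, HasDerivAt u ((1 / 2) * Real.sqrt c₁) s := by
    intro s
    simp only [hu_def]
    simpa using ((hasDerivAt_id s).add_const c₂).const_mul ((1 / 2) * Real.sqrt c₁)
  have hd1 : ∀ s, HasDerivAt ω
      (-(Real.sqrt c₁) * (Real.sinh (u s) / Real.cosh (u s))) s := by
    intro s
    rw [hωe]
    have hcosh : HasDerivAt (fun s => Real.cosh (u s))
        (Real.sinh (u s) * ((1 / 2) * Real.sqrt c₁)) s :=
      (Real.hasDerivAt_cosh (u s)).comp s (hu' s)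
    have hlog : HasDerivAt (fun s => Real.log (Real.cosh (u s)))
        ((Real.sinh (u s) * ((1 / 2) * Real.sqrt c₁)) / Real.cosh (u s)) s :=
      hcosh.log (hcoshne s)
    have := (hasDerivAt_const s (Real.log (-c₁ / (2 * R)))).sub (hlog.const_mul 2)
    refine this.congr_deriv ?_
    field_simp
    ring
  have hderiv : deriv ω = fun s => -(Real.sqrt c₁) * (Real.sinh (u s) / Real.cosh (u s)) :=
    funext fun s => (hd1 s).deriv
  -- second derivative
  have hsinh : HasDerivAt (fun s => Real.sinh (u s))
      (Real.cosh (u t) * ((1 / 2) * Real.sqrt c₁)) t :=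
    (Real.hasDerivAt_sinh (u t)).comp t (hu' t)
  have hcosh : HasDerivAt (fun s => Real.cosh (u s))
      (Real.sinh (u t) * ((1 / 2) * Real.sqrt c₁)) t :=
    (Real.hasDerivAt_cosh (u t)).comp t (hu' t)
  have hd2 : HasDerivAt (deriv ω)
      (-(c₁ / 2) / (Real.cosh (u t)) ^ 2) t := by
    rw [hderiv]
    have hdiv := (hsinh.div hcosh (hcoshne t)).const_mul (-(Real.sqrt c₁))
    refine hdiv.congr_deriv ?_
    have hs : Real.sqrt c₁ * Real.sqrt c₁ = c₁ := Real.mul_self_sqrt hc₁.le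
    field_simp
    nlinarith [hsq t]
  have h2 : iteratedDeriv 2 ω t = -(c₁ / 2) / (Real.cosh (u t)) ^ 2 := by
    rw [iteratedDeriv_succ, iteratedDeriv_one]
    exact hd2.deriv
  rw [h2, hω t, Real.exp_log (hpos t ht), harg t]
  field_simp
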